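/- arXiv:1810.11471 — 4 statements merged into one kernel-verified Lean document; each statement's English description precedes it below -/
import Mathlib

section
/- Suppose a partition {A_1,…,A_N} of Ω with probabilities π_n = P1(A_n) > 0 and z-values z_n = E[Z | A_n] satisfies Σ_n π_n z_n = 0, and some z_j ≠ z_k. Consider minimizing Σ_n π_n w_n over nonnegative wages (w_1,…,w_N) subject to Σ_n π_n √(w_n) z_n ≥ c for a given c > 0. Then the minimal value equals c² · (Σ_n π_n max{0, z_n}²)^{-1}, attained by w_n = c² max{0,z_n}² (Σ_m π_m max{0,z_m}²)^{-2}. -/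
/-- With square-root utility, the wage-minimization problem subject to the
incentive constraint has minimal value `c² (∑ₙ πₙ max{0,zₙ}²)⁻¹`, attained by
`wₙ = c² max{0,zₙ}² (∑ₘ πₘ max{0,zₘ}²)⁻²`. -/
theorem sqrt_utility_min_incentive_cost {N : ℕ} (p z : Fin N → ℝ) (c : ℝ) (hc : 0 < c)
    (hp : ∀ n, 0 < p n) (hsum : ∑ n, p n = 1)
    (hzero : ∑ n, p n * z n = 0) (j k : Fin N) (hjk : z j ≠ z k) :
    let S := ∑ n, p n * (max 0 (z n)) ^ 2
    let wstar : Fin N → ℝ := fun n => c ^ 2 * (max 0 (z n)) ^ 2 / S ^ 2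
    IsLeast {v | ∃ w : Fin N → ℝ, (∀ n, 0 ≤ w n) ∧
        c ≤ ∑ n, p n * Real.sqrt (w n) * z n ∧ v = ∑ n, p n * w n} (c ^ 2 / S) ∧
      (∀ n, 0 ≤ wstar n) ∧ (c ≤ ∑ n, p n * Real.sqrt (wstar n) * z n) ∧
      ∑ n, p n * wstar n = c ^ 2 / S := by
  intro S wstar
  have hS0 : 0 ≤ S := Finset.sum_nonneg fun n _ => mul_nonneg (hp n).le (sq_nonneg _)
  have hSpos : 0 < S := by
    rcases hS0.lt_or_eq with h | h
    · exact h
    exfalso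
    have hle : ∀ n, z n ≤ 0 := by
      intro n
      have hterm := (Finset.sum_eq_zero_iff_of_nonneg
        (fun m _ => mul_nonneg (hp m).le (sq_nonneg (max 0 (z m))))).mp h.symm n
        (Finset.mem_univ n)
      have h2 : (max 0 (z n)) ^ 2 = 0 := by
        rcases mul_eq_zero.mp hterm with h' | h'
        · exact absurd h' (hp n).ne'
        · exact h'
      have hmax : max 0 (z n) = 0 := pow_eq_zero_iff two_ne_zero |>.mp h2
      exact max_eq_left_iff.mp hmax
    have hz0 : ∀ n, z n = 0 := by
      intro n
      have := (Finset.sum_eq_zero_iff_of_nonneg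
        (fun m _ => mul_nonneg (hp m).le (neg_nonneg.mpr (hle m)))).mp
        (by rw [show (∑ m, p m * -z m) = -∑ m, p m * z m by simp [Finset.sum_neg_distrib], hzero, neg_zero])
        n (Finset.mem_univ n)
      have : -z n = 0 := by
        rcases mul_eq_zero.mp this with h' | h'
        · exact absurd h' (hp n).ne'
        · exact h'
      linarith
    exact hjk (by rw [hz0 j, hz0 k])
  have hmaxz : ∀ n, max 0 (z n) * z n = (max 0 (z n)) ^ 2 := by
    intro n
    rcases le_or_gt (z n) 0 with h | h
    · rw [max_eq_left h]; ring
    · rw [max_eq_right h.le]; ring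
  -- properties of wstar
  have hwnn : ∀ n, 0 ≤ wstar n := fun n => by positivity
  have hsqrt : ∀ n, Real.sqrt (wstar n) = c * max 0 (z n) / S := by
    intro n
    have : wstar n = (c * max 0 (z n) / S) ^ 2 := by
      simp only [wstar]; field_simp
    rw [this, Real.sqrt_sq (by positivity)]
  have hcons : ∑ n, p n * Real.sqrt (wstar n) * z n = c := by
    simp_rw [hsqrt]
    have : ∑ n, p n * (c * max 0 (z n) / S) * z n
        = (c / S) * ∑ n, p n * (max 0 (z n)) ^ 2 := by
      rw [Finset.mul_sum]
      refine Finset.sum_congr rfl fun n _ => ?_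
      rw [← hmaxz n]; ring
    rw [this]
    field_simp
    rfl
  have hval : ∑ n, p n * wstar n = c ^ 2 / S := by
    have : ∑ n, p n * wstar n = (c ^ 2 / S ^ 2) * ∑ n, p n * (max 0 (z n)) ^ 2 := by
      rw [Finset.mul_sum]
      refine Finset.sum_congr rfl fun n _ => ?_
      simp only [wstar]; ring
    rw [this]
    field_simp
    ring
  refine ⟨⟨⟨wstar, hwnn, hcons.ge, hval.symm⟩, ?_⟩, hwnn, hcons.ge, hval⟩
  rintro v ⟨w, hwnn', hic, rfl⟩
  set A := ∑ n, p n * w n with hA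
  have hAnn : 0 ≤ A := Finset.sum_nonneg fun n _ => mul_nonneg (hp n).le (hwnn' n)
  have hT : c ≤ ∑ n, p n * Real.sqrt (w n) * max 0 (z n) := by
    refine hic.trans (Finset.sum_le_sum fun n _ => ?_)
    exact mul_le_mul_of_nonneg_left (le_max_right _ _)
      (mul_nonneg (hp n).le (Real.sqrt_nonneg _))
  have hcs : (∑ n, p n * Real.sqrt (w n) * max 0 (z n)) ^ 2 ≤ A * S := by
    have h1 : ∀ n, p n * Real.sqrt (w n) * max 0 (z n)
        = (Real.sqrt (p n) * Real.sqrt (w n)) * (Real.sqrt (p n) * max 0 (z n)) := by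
      intro n
      rw [show Real.sqrt (p n) * Real.sqrt (w n) * (Real.sqrt (p n) * max 0 (z n))
        = (Real.sqrt (p n) * Real.sqrt (p n)) * (Real.sqrt (w n) * max 0 (z n)) by ring,
        Real.mul_self_sqrt (hp n).le]
      ring
    simp_rw [h1]
    refine le_trans (Finset.sum_mul_sq_le_sq_mul_sq _ _ _) (le_of_eq ?_)
    congr 1
    · refine Finset.sum_congr rfl fun n _ => ?_
      rw [mul_pow, Real.sq_sqrt (hp n).le, Real.sq_sqrt (hwnn' n)]
    · refine Finset.sum_congr rfl fun n _ => ?_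
      rw [mul_pow, Real.sq_sqrt (hp n).le]
  have hc2 : c ^ 2 ≤ A * S := by
    refine le_trans ?_ hcs
    exact pow_le_pow_left₀ hc.le hT 2
  rw [div_le_iff₀ hSpos]
  exact hc2
end

section
/- With Z uniformly distributed on [-1/2, 1/2], partition the interval into N consecutive subintervals with cut points -1/2 = ẑ_0 < ẑ_1 < … < ẑ_N = 1/2; the probability of the n-th cell is π_n = ẑ_n - ẑ_{n-1} and its conditional mean is z_n = (ẑ_{n-1}+ẑ_n)/2. Then the choice of interior cut points maximizing Σ_{n=1}^N π_n max{0, z_n}² is ẑ_n = (2n-1)/(4N-2) for n = 1,…,N-1. -/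
private lemma tele_sum (M : ℕ) (g : Fin (M + 1) → ℝ) :
    ∑ n : Fin M, (g n.succ - g n.castSucc) = g (Fin.last M) - g 0 := by
  induction M with
  | zero => simp
  | succ M ih =>
      rw [Fin.sum_univ_castSucc]
      have h1 : ∀ n : Fin M, g (n.castSucc).succ - g (n.castSucc).castSucc
          = (g ∘ Fin.castSucc) n.succ - (g ∘ Fin.castSucc) n.castSucc := by
        intro n; simp only [Function.comp_apply, Fin.succ_castSucc]
      rw [Finset.sum_congr rfl (fun n _ => h1 n), ih (g ∘ Fin.castSucc)]
      simp [Fin.succ_last]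

private lemma cubic_bound (w : ℝ) (hw0 : 0 < w) : ∀ a b : ℝ, a ≤ b →
    (b - a) * (max 0 ((a + b) / 2)) ^ 2
      ≤ (b^3/3 - w^2*b/4) - (a^3/3 - w^2*a/4) + w^3/6 := by
  intro a b hab
  rcases le_or_gt ((a + b) / 2) 0 with h | h
  · rw [max_eq_left h]
    nlinarith [mul_nonneg (sub_nonneg.2 hab) (sq_nonneg ((a+b)/2)),
      mul_nonneg (sq_nonneg (b - a - w)) (by linarith : (0:ℝ) ≤ b - a + 2*w)]
  · rw [max_eq_right h.le]
    nlinarith [mul_nonneg (sq_nonneg (b - a - w)) (by linarith : (0:ℝ) ≤ b - a + 2*w)]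

private noncomputable def phi (w : ℝ) : ℝ → ℝ :=
  fun x => if x ≤ -(w/2) then w^3/12 else x^3/3 - w^2 * x/4

private lemma pair_bound (w : ℝ) (hw0 : 0 < w) : ∀ a b : ℝ, a ≤ b →
    (b - a) * (max 0 ((a + b) / 2)) ^ 2 ≤ phi w b - phi w a + w^3/6 := by
  intro a b hab
  by_cases hA : a ≤ -(w/2)
  · by_cases hB : b ≤ -(w/2)
    · have hmid : (a + b) / 2 ≤ 0 := by linarith
      rw [max_eq_left hmid]
      simp only [phi, if_pos hA, if_pos hB]
      have : (0:ℝ) < w^3 := by positivity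
      nlinarith
    · push_neg at hB
      simp only [phi, if_pos hA, if_neg (not_le.2 hB)]
      have key := cubic_bound w hw0 (-(w/2)) b (by linarith)
      have hphit : ((-(w/2))^3/3 - w^2*(-(w/2))/4) = w^3/12 := by ring
      rw [hphit] at key
      have mono : (b - a) * (max 0 ((a + b) / 2)) ^ 2
          ≤ (b - (-(w/2))) * (max 0 (((-(w/2)) + b) / 2)) ^ 2 := by
        rcases le_or_gt ((a + b) / 2) 0 with h | h
        · rw [max_eq_left h]
          have h1 : (0:ℝ) ≤ b - (-(w/2)) := by linarith
          have := mul_nonneg h1 (sq_nonneg (max 0 (((-(w/2)) + b) / 2)))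
          nlinarith
        · have h2 : (0:ℝ) < ((-(w/2)) + b) / 2 := by linarith
          rw [max_eq_right h.le, max_eq_right h2.le]
          have hs : 0 < a + b := by linarith
          have hu : 0 ≤ -(w/2) - a := by linarith
          have hb : 0 ≤ b - (-(w/2)) - (a+b) := by linarith
          nlinarith [mul_nonneg (mul_nonneg hs.le hs.le) hu,
            mul_nonneg (mul_nonneg hs.le hu) hu,
            mul_nonneg (mul_nonneg hb hs.le) hu,
            mul_nonneg (mul_nonneg hb hu) hu]
      linarith
  · push_neg at hA
    have hB : ¬ b ≤ -(w/2) := by push_neg; linarith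
    simp only [phi, if_neg (not_le.2 hA), if_neg hB]
    exact cubic_bound w hw0 a b hab

/-- For `Z` uniform on `[-1/2, 1/2]` partitioned into `N` consecutive
intervals, the cut points maximizing `∑ₙ πₙ max{0,zₙ}²` (with `πₙ = ẑₙ - ẑₙ₋₁` and
`zₙ = (ẑₙ₋₁ + ẑₙ)/2`) are `ẑₙ = (2n-1)/(4N-2)` for `n = 1, …, N-1`. -/
theorem optimal_cutpoints_uniform (N : ℕ) (hN : 1 ≤ N)
    (zstar : Fin (N + 1) → ℝ)
    (hzstar : ∀ i : Fin (N + 1),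
      zstar i = if (i : ℕ) = 0 then -(1 / 2) else ((2 * (i : ℕ) - 1 : ℝ)) / (4 * N - 2)) :
    (zstar 0 = -(1 / 2) ∧ zstar (Fin.last N) = 1 / 2 ∧ Monotone zstar) ∧
    ∀ z : Fin (N + 1) → ℝ, z 0 = -(1 / 2) → z (Fin.last N) = 1 / 2 → Monotone z →
      (∑ n : Fin N, (z n.succ - z n.castSucc) * (max 0 ((z n.castSucc + z n.succ) / 2)) ^ 2) ≤
      (∑ n : Fin N,
        (zstar n.succ - zstar n.castSucc) * (max 0 ((zstar n.castSucc + zstar n.succ) / 2)) ^ 2) := by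
  have hNR : (1:ℝ) ≤ (N:ℝ) := by exact_mod_cast hN
  have hm0 : (0:ℝ) < 2 * (N:ℝ) - 1 := by linarith
  set m : ℝ := 2 * (N:ℝ) - 1 with hm
  set w : ℝ := 1 / m with hwdef
  have hw0 : 0 < w := by positivity
  have hw1 : w ≤ 1 := by rw [hwdef, div_le_one hm0]; linarith
  have hden : (4 * (N:ℝ) - 2) = 2 * m := by rw [hm]; ring
  have hden0 : (4 * (N:ℝ) - 2) ≠ 0 := by rw [hden]; positivity
  -- endpoints and monotonicity of zstar
  have hz0 : zstar 0 = -(1 / 2) := by rw [hzstar]; simp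
  have hzlast : zstar (Fin.last N) = 1 / 2 := by
    rw [hzstar]
    have h1 : ((Fin.last N : Fin (N+1)) : ℕ) = N := rfl
    rw [h1, if_neg (by omega)]
    rw [div_eq_iff hden0]; ring
  have hmono : Monotone zstar := by
    intro i j hij
    have hij' : (i:ℕ) ≤ (j:ℕ) := hij
    rw [hzstar i, hzstar j]
    by_cases hi : (i:ℕ) = 0
    · rw [if_pos hi]
      by_cases hj : (j:ℕ) = 0
      · rw [if_pos hj]
      · rw [if_neg hj]
        have hj1 : (1:ℝ) ≤ ((j:ℕ):ℝ) := by
          exact_mod_cast Nat.one_le_iff_ne_zero.2 hj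
        have hpos : (0:ℝ) ≤ (2*((j:ℕ):ℝ) - 1)/(4*(N:ℝ)-2) :=
          div_nonneg (by linarith) (by rw [hden]; positivity)
        linarith
    · have hj : (j:ℕ) ≠ 0 := by omega
      rw [if_neg hi, if_neg hj]
      have h1 : ((i:ℕ):ℝ) ≤ ((j:ℕ):ℝ) := by exact_mod_cast hij'
      have h2 : (0:ℝ) < 4*(N:ℝ)-2 := by rw [hden]; positivity
      gcongr

  refine ⟨⟨hz0, hzlast, hmono⟩, ?_⟩
  intro z h0 hlast hmonoz
  -- telescoped sum of upper bounds
  have sumeq : ∀ y : Fin (N+1) → ℝ,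
      (∑ n : Fin N, (phi w (y n.succ) - phi w (y n.castSucc) + w^3/6))
        = phi w (y (Fin.last N)) - phi w (y 0) + N * (w^3/6) := by
    intro y
    rw [Finset.sum_add_distrib, Finset.sum_const, tele_sum N (fun i => phi w (y i))]
    simp [Finset.card_univ, mul_comm]
  have bound : (∑ n : Fin N, (z n.succ - z n.castSucc) * (max 0 ((z n.castSucc + z n.succ)/2))^2)
      ≤ phi w (z (Fin.last N)) - phi w (z 0) + N * (w^3/6) := by
    rw [← sumeq z]
    apply Finset.sum_le_sum
    intro n _
    exact pair_bound w hw0 _ _ (hmonoz (Fin.castSucc_le_succ n))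
  -- per-cell equality for zstar
  have cell : ∀ n : Fin N,
      (zstar n.succ - zstar n.castSucc) * (max 0 ((zstar n.castSucc + zstar n.succ)/2))^2
        = phi w (zstar n.succ) - phi w (zstar n.castSucc) + w^3/6 := by
    intro n
    have hs : ((n.succ : Fin (N+1)) : ℕ) = (n:ℕ) + 1 := rfl
    have hc : ((n.castSucc : Fin (N+1)) : ℕ) = (n:ℕ) := rfl
    rw [hzstar, hzstar, hs, hc]
    by_cases hn : (n:ℕ) = 0
    · rw [if_pos hn, if_neg (by omega), hn]
      have hb : (2*((0:ℕ)+1:ℕ) - 1 : ℝ)/(4*(N:ℝ)-2) = w/2 := by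
        push_cast
        rw [hden, hwdef]
        field_simp
        ring
      rw [hb]
      have hmax : max 0 ((-(1/2:ℝ) + w/2)/2) = 0 := max_eq_left (by linarith)
      rw [hmax]
      have hp1 : phi w (w/2) = (w/2)^3/3 - w^2*(w/2)/4 := by
        simp only [phi, if_neg (by push_neg; linarith : ¬ (w/2 ≤ -(w/2)))]
      have hp2 : phi w (-(1/2:ℝ)) = w^3/12 := by
        simp only [phi, if_pos (by linarith : -(1/2:ℝ) ≤ -(w/2))]
      rw [hp1, hp2]; ring
    · have hk1 : (1:ℝ) ≤ ((n:ℕ):ℝ) := by exact_mod_cast Nat.one_le_iff_ne_zero.2 hn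
      rw [if_neg hn, if_neg (by omega)]
      set a : ℝ := (2*((n:ℕ):ℝ) - 1)/(4*(N:ℝ)-2) with hadef
      have hden' : (0:ℝ) < 4*(N:ℝ)-2 := by rw [hden]; positivity
      set b : ℝ := (2*(((n:ℕ)+1:ℕ):ℝ) - 1)/(4*(N:ℝ)-2) with hbdef
      have ha0 : 0 < a := by
        rw [hadef]; apply div_pos (by linarith) hden'
      have hb0 : 0 < b := by
        rw [hbdef]; push_cast; apply div_pos (by linarith) hden'
      have hmax : max 0 ((a + b)/2) = (a+b)/2 := max_eq_right (by positivity)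
      have hpa : phi w a = a^3/3 - w^2*a/4 := by
        simp only [phi, if_neg (by push_neg; linarith : ¬ (a ≤ -(w/2)))]
      have hpb : phi w b = b^3/3 - w^2*b/4 := by
        simp only [phi, if_neg (by push_neg; linarith : ¬ (b ≤ -(w/2)))]
      rw [hmax, hpa, hpb, hadef, hbdef, hwdef, hden]
      have hm0' : m ≠ 0 := ne_of_gt hm0
      push_cast
      field_simp
      ring
  calc (∑ n : Fin N, (z n.succ - z n.castSucc) * (max 0 ((z n.castSucc + z n.succ)/2))^2)
      ≤ phi w (z (Fin.last N)) - phi w (z 0) + N * (w^3/6) := bound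
    _ = phi w (zstar (Fin.last N)) - phi w (zstar 0) + N * (w^3/6) := by
        rw [h0, hlast, hz0, hzlast]
    _ = ∑ n : Fin N, (phi w (zstar n.succ) - phi w (zstar n.castSucc) + w^3/6) := (sumeq zstar).symm
    _ = ∑ n : Fin N, (zstar n.succ - zstar n.castSucc) * (max 0 ((zstar n.castSucc + zstar n.succ)/2))^2 :=
        (Finset.sum_congr rfl (fun n _ => (cell n).symm))
end

section
/- Let P1 be an atomless probability measure and Z an integrable random variable. For every measurable set A with P1(A) > 0 and every ε ∈ (0, P1(A)], there exists a measurable subset A_ε ⊆ A with P1(A_ε) = ε and E[Z | A_ε] = E[Z | A]. -/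
open MeasureTheory
open scoped ENNReal

open Set Filter
open scoped Topology

section Helpers

variable {Ω : Type*} [MeasurableSpace Ω] {μ : Measure Ω} [IsFiniteMeasure μ]

theorem my_small_pow (hatom : ∀ A : Set Ω, MeasurableSet A → 0 < μ A →
      ∃ B ⊆ A, MeasurableSet B ∧ 0 < μ B ∧ μ B < μ A) :
    ∀ n : ℕ, ∀ A : Set Ω, MeasurableSet A → 0 < μ A →
      ∃ B ⊆ A, MeasurableSet B ∧ 0 < μ B ∧ μ B ≤ μ A / 2 ^ n := by
  intro n
  induction n with
  | zero => intro A hA hpos; exact ⟨A, le_rfl, hA, hpos, by simp⟩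
  | succ n ih =>
    intro A hA hpos
    obtain ⟨B, hBA, hBm, hBpos, hBle⟩ := ih A hA hpos
    obtain ⟨C, hCB, hCm, hCpos, hClt⟩ := hatom B hBm hBpos
    have hhalf : μ A / 2 ^ n / 2 = μ A / 2 ^ (n + 1) := by
      rw [pow_succ, div_eq_mul_inv, div_eq_mul_inv, div_eq_mul_inv,
        ENNReal.mul_inv (Or.inl (by positivity)) (Or.inl (by simp)), mul_assoc]
    rcases le_or_gt (μ C) (μ B / 2) with h | h
    · exact ⟨C, hCB.trans hBA, hCm, hCpos,
        h.trans ((ENNReal.div_le_div_right hBle 2).trans hhalf.le)⟩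
    · refine ⟨B \ C, (Set.diff_subset).trans hBA, hBm.diff hCm, ?_, ?_⟩
      · rw [measure_diff hCB hCm.nullMeasurableSet (ne_top_of_lt hClt)]
        exact tsub_pos_of_lt hClt
      · rw [measure_diff hCB hCm.nullMeasurableSet (ne_top_of_lt hClt)]
        have : μ B - μ C ≤ μ B / 2 := by
          apply tsub_le_iff_right.2
          calc μ B = μ B / 2 + μ B / 2 := (ENNReal.add_halves _).symm
          _ ≤ μ B / 2 + μ C := by gcongr
        exact this.trans ((ENNReal.div_le_div_right hBle 2).trans hhalf.le)

theorem my_small (hatom : ∀ A : Set Ω, MeasurableSet A → 0 < μ A →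
      ∃ B ⊆ A, MeasurableSet B ∧ 0 < μ B ∧ μ B < μ A) :
    ∀ A : Set Ω, MeasurableSet A → 0 < μ A → ∀ δ : ℝ≥0∞, 0 < δ →
      ∃ B ⊆ A, MeasurableSet B ∧ 0 < μ B ∧ μ B ≤ δ := by
  intro A hA hpos δ hδ
  have hfin : μ A ≠ ∞ := measure_ne_top μ A
  -- find n with μ A / 2 ^ n ≤ δ
  obtain ⟨n, hn⟩ : ∃ n : ℕ, μ A / 2 ^ n ≤ δ := by
    have hane : δ / μ A ≠ 0 := (ENNReal.div_pos hδ.ne' hfin).ne'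
    rcases ENNReal.exists_inv_two_pow_lt hane with ⟨n, hn⟩
    refine ⟨n, ?_⟩
    have h1 : μ A * 2⁻¹ ^ n ≤ μ A * (δ / μ A) := by gcongr
    have h2 : μ A * (δ / μ A) ≤ δ := ENNReal.mul_div_le
    calc μ A / 2 ^ n = μ A * 2⁻¹ ^ n := by
          rw [div_eq_mul_inv, ENNReal.inv_pow]
    _ ≤ δ := h1.trans h2
  obtain ⟨B, hBA, hBm, hBpos, hBle⟩ := my_small_pow hatom n A hA hpos
  exact ⟨B, hBA, hBm, hBpos, hBle.trans hn⟩

theorem my_sierpinski (hatom : ∀ A : Set Ω, MeasurableSet A → 0 < μ A →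
      ∃ B ⊆ A, MeasurableSet B ∧ 0 < μ B ∧ μ B < μ A)
    (hsmall : ∀ A : Set Ω, MeasurableSet A → 0 < μ A → ∀ δ : ℝ≥0∞, 0 < δ →
      ∃ B ⊆ A, MeasurableSet B ∧ 0 < μ B ∧ μ B ≤ δ) :
    ∀ A : Set Ω, MeasurableSet A → ∀ ε : ℝ≥0∞, ε ≤ μ A →
      ∃ B ⊆ A, MeasurableSet B ∧ μ B = ε := by
  intro A hA ε hε
  have hεfin : ε ≠ ∞ := (hε.trans_lt (measure_lt_top μ A)).ne
  set S : Set Ω → ℝ≥0∞ :=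
    fun D => ⨆ C ∈ {C : Set Ω | MeasurableSet C ∧ C ⊆ A \ D ∧ μ (D ∪ C) ≤ ε}, μ C with hS
  have hSle : ∀ D, S D ≤ ε := by
    intro D
    refine iSup₂_le fun C hC => ?_
    exact (measure_mono Set.subset_union_right).trans hC.2.2
  have step : ∀ D : Set Ω, MeasurableSet D → D ⊆ A → μ D ≤ ε →
      ∃ C : Set Ω, MeasurableSet C ∧ C ⊆ A \ D ∧ μ (D ∪ C) ≤ ε ∧ S D ≤ 2 * μ C := by
    intro D hDm hDA hDle
    rcases eq_or_ne (S D) 0 with h0 | h0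
    · exact ⟨∅, MeasurableSet.empty, Set.empty_subset _,
        by simpa using hDle, by simp [h0]⟩
    · have hfin : S D ≠ ∞ := ((hSle D).trans_lt (hεfin.lt_top)).ne
      have hhalf : S D / 2 < S D := ENNReal.half_lt_self h0 hfin
      conv_rhs at hhalf => rw [hS]
      simp only [lt_iSup_iff, Set.mem_setOf_eq] at hhalf
      obtain ⟨C, ⟨hCm, hCsub, hCle⟩, hlt⟩ := hhalf
      refine ⟨C, hCm, hCsub, hCle, ?_⟩
      have : S D < μ C * 2 := (ENNReal.div_lt_iff (by simp) (by simp)).1 hlt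
      rw [mul_comm] at this
      exact this.le
  -- recursive construction
  let T := {D : Set Ω // MeasurableSet D ∧ D ⊆ A ∧ μ D ≤ ε}
  have hnext : ∀ D : T, ∃ C : Set Ω,
      MeasurableSet C ∧ C ⊆ A \ D.1 ∧ μ (D.1 ∪ C) ≤ ε ∧ S D.1 ≤ 2 * μ C :=
    fun D => step D.1 D.2.1 D.2.2.1 D.2.2.2
  choose next hnm hnsub hnle hnS using hnext
  let f : ℕ → T := fun n => Nat.rec
    ⟨∅, MeasurableSet.empty, Set.empty_subset _, by simp⟩
    (fun n D => ⟨D.1 ∪ next D, D.2.1.union (hnm D),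
      Set.union_subset D.2.2.1 ((hnsub D).trans Set.diff_subset), hnle D⟩) n
  have hfsucc : ∀ n, (f (n+1)).1 = (f n).1 ∪ next (f n) := fun n => rfl
  have hmono : Monotone fun n => (f n).1 := by
    apply monotone_nat_of_le_succ
    intro n
    rw [hfsucc]
    exact Set.subset_union_left
  set B := ⋃ n, (f n).1 with hB
  have hBm : MeasurableSet B := MeasurableSet.iUnion fun n => (f n).2.1
  have hBA : B ⊆ A := Set.iUnion_subset fun n => (f n).2.2.1
  have hμB : μ B = ⨆ n, μ (f n).1 :=
    Directed.measure_iUnion (hmono.directed_le)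
  have hBle : μ B ≤ ε := by
    rw [hμB]; exact iSup_le fun n => (f n).2.2.2
  refine ⟨B, hBA, hBm, ?_⟩
  by_contra hne
  have hBlt : μ B < ε := lt_of_le_of_ne hBle hne
  have hABpos : 0 < μ (A \ B) := by
    rw [measure_diff hBA hBm.nullMeasurableSet (measure_ne_top μ B)]
    exact tsub_pos_of_lt (hBlt.trans_le hε)
  obtain ⟨C, hCsub, hCm, hCpos, hCle⟩ :=
    hsmall (A \ B) (hA.diff hBm) hABpos (ε - μ B) (tsub_pos_of_lt hBlt)
  -- C competes at every stage
  have hkey : ∀ n, μ C ≤ S (f n).1 := by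
    intro n
    have h1 : C ⊆ A \ (f n).1 := by
      refine hCsub.trans (Set.diff_subset_diff_right ?_)
      exact Set.subset_iUnion (fun n => (f n).1) n
    have h2 : μ ((f n).1 ∪ C) ≤ ε := by
      refine (measure_union_le _ _).trans ?_
      have : μ (f n).1 ≤ μ B := measure_mono (Set.subset_iUnion (fun n => (f n).1) n)
      calc μ (f n).1 + μ C ≤ μ B + (ε - μ B) := by gcongr
      _ = ε := add_tsub_cancel_of_le hBlt.le
    rw [hS]
    exact le_iSup₂_of_le C ⟨hCm, h1, h2⟩ le_rfl
  have hgrow : ∀ n, μ (next (f n)) ≥ μ C / 2 := by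
    intro n
    have h := (hkey n).trans (hnS (f n))
    exact (ENNReal.div_le_iff (by simp) (by simp)).2 (by rwa [mul_comm] at h)
  have hdisj : ∀ n, μ (f (n+1)).1 = μ (f n).1 + μ (next (f n)) := by
    intro n
    rw [hfsucc]
    refine measure_union ?_ (hnm (f n))
    rw [Set.disjoint_left]
    intro x hx hx'
    exact ((hnsub (f n)) hx').2 hx
  have hlb : ∀ n : ℕ, (n : ℝ≥0∞) * (μ C / 2) ≤ μ (f n).1 := by
    intro n
    induction n with
    | zero => simp
    | succ n ih =>
      rw [hdisj n]
      push_cast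
      rw [add_mul, one_mul]
      exact add_le_add ih (hgrow n)
  have hCfin : μ C / 2 ≠ ∞ := by
    simp [ENNReal.div_eq_top, measure_ne_top μ C]
  have hC2pos : μ C / 2 ≠ 0 := by
    simp only [ne_eq, ENNReal.div_eq_zero_iff]
    push_neg
    exact ⟨hCpos.ne', by simp⟩
  have hdivfin : ε / (μ C / 2) ≠ ∞ := by
    simp [ENNReal.div_eq_top, hεfin, hC2pos]
  obtain ⟨n, hn⟩ := ENNReal.exists_nat_gt hdivfin
  have hfinal : ε < (n : ℝ≥0∞) * (μ C / 2) :=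
    (ENNReal.div_lt_iff (Or.inl hC2pos) (Or.inl hCfin)).1 hn
  exact absurd ((hfinal.trans_le (hlb n)).trans_le (f n).2.2.2) (lt_irrefl ε)

theorem my_tau
    (hsier : ∀ A : Set Ω, MeasurableSet A → ∀ ε : ℝ≥0∞, ε ≤ μ A →
      ∃ B ⊆ A, MeasurableSet B ∧ μ B = ε)
    (A : Set Ω) (hA : MeasurableSet A) (hpos : 0 < μ A) :
    ∃ τ : Ω → ℝ, Measurable τ ∧ (∀ ω, 0 ≤ τ ω) ∧
      ∀ t : ℝ, t ≤ (μ A).toReal → μ (A ∩ {ω | τ ω < t}) = ENNReal.ofReal t := by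
  set L : ℝ := (μ A).toReal with hL
  have hAfin : μ A ≠ ∞ := measure_ne_top μ A
  have hLpos : 0 < L := ENNReal.toReal_pos hpos.ne' hAfin
  have hofL : ENNReal.ofReal L = μ A := ENNReal.ofReal_toReal hAfin
  set P : ℕ → (ℕ → Set Ω) → Prop := fun n g =>
    (∀ k, MeasurableSet (g k)) ∧ (∀ k, g k ⊆ A) ∧ (∀ k, g k ⊆ g (k+1)) ∧
      (∀ k, μ (g k) = min ((k : ℝ≥0∞) * μ A / 2 ^ n) (μ A)) with hP
  have hbase : P 0 (fun k => if k = 0 then (∅ : Set Ω) else A) := by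
    refine ⟨fun k => ?_, fun k => ?_, fun k => ?_, fun k => ?_⟩
    · by_cases h : k = 0 <;> simp [h, hA]
    · by_cases h : k = 0 <;> simp [h]
    · by_cases h : k = 0 <;> simp [h]
    · by_cases h : k = 0
      · simp [h]
      · have h1 : (1 : ℝ≥0∞) ≤ (k : ℝ≥0∞) := by
          exact_mod_cast Nat.one_le_iff_ne_zero.2 h
        have h2 : μ A ≤ (k : ℝ≥0∞) * μ A := le_mul_of_one_le_left zero_le h1
        simp [h, min_eq_right, h2]
  have keycast : ∀ (j n : ℕ), ((2*j : ℕ) : ℝ≥0∞) * μ A / 2 ^ (n+1)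
      = (j:ℝ≥0∞) * μ A / 2^n := by
    intro j n
    push_cast
    rw [pow_succ, mul_comm ((2:ℝ≥0∞)^n) 2, mul_assoc,
      ENNReal.mul_div_mul_left _ _ (by simp) (by simp)]
  have stepex : ∀ n (g : ℕ → Set Ω), P n g →
      ∃ g', P (n+1) g' ∧ ∀ k, g' (2*k) = g k := by
    intro n g hg
    obtain ⟨hgm, hgA, hgmono, hgμ⟩ := hg
    set tgt : ℕ → ℝ≥0∞ := fun k => min ((k : ℝ≥0∞) * μ A / 2 ^ (n+1)) (μ A) with htgt
    have htgtmono : Monotone tgt := fun a b hab =>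
      min_le_min (ENNReal.div_le_div_right
        (mul_le_mul_left (by exact_mod_cast hab) _) _) le_rfl
    have hμeven : ∀ j : ℕ, μ (g j) = tgt (2*j) := by
      intro j
      rw [hgμ, htgt]
      simp only [keycast j n]
    have hEex : ∀ j : ℕ, ∃ E ⊆ g (j+1) \ g j, MeasurableSet E ∧
        μ E = tgt (2*j+1) - μ (g j) := by
      intro j
      apply hsier _ ((hgm (j+1)).diff (hgm j))
      rw [measure_diff (hgmono j) (hgm j).nullMeasurableSet (measure_ne_top μ _)]
      have h1 : tgt (2*j+1) ≤ μ (g (j+1)) := by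
        rw [hμeven (j+1)]
        exact htgtmono (by omega)
      exact tsub_le_tsub_right h1 _
    choose E hEsub hEm hEμ using hEex
    have hdisjE : ∀ j, Disjoint (g j) (E j) := by
      intro j
      rw [Set.disjoint_left]
      intro x hx hx'
      exact ((hEsub j) hx').2 hx
    refine ⟨fun k => if Even k then g (k/2) else g (k/2) ∪ E (k/2), ?_, ?_⟩
    · refine ⟨fun k => ?_, fun k => ?_, fun k => ?_, fun k => ?_⟩
      · by_cases h : Even k
        · simp only [h, if_pos]; exact hgm _
        · simp only [h, if_neg, not_false_iff]
          exact (hgm _).union (hEm _)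
      · by_cases h : Even k
        · simp only [h, if_pos]; exact hgA _
        · simp only [h, if_neg, not_false_iff]
          exact Set.union_subset (hgA _) (((hEsub _).trans Set.diff_subset).trans (hgA _))
      · rcases Nat.even_or_odd k with h | h
        · obtain ⟨j, hj⟩ := h
          have hk : k = 2*j := by omega
          subst hk
          have h2 : ¬ Even (2*j+1) := by simp [Nat.even_add_one]
          have e1 : 2*j/2 = j := by omega
          have e2 : (2*j+1)/2 = j := by omega
          simp only [even_two_mul, if_pos, h2, if_neg, not_false_iff, e1, e2]
          exact Set.subset_union_left
        · obtain ⟨j, hj⟩ := h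
          subst hj
          have h1 : ¬ Even (2*j+1) := by simp [Nat.even_add_one]
          have h2 : Even (2*j+1+1) := by refine ⟨j+1, by ring⟩
          have e1 : (2*j+1)/2 = j := by omega
          have e2 : (2*j+1+1)/2 = j+1 := by omega
          simp only [h1, if_neg, not_false_iff, h2, if_pos, e1, e2]
          exact Set.union_subset (hgmono j) ((hEsub j).trans Set.diff_subset)
      · rcases Nat.even_or_odd k with h | h
        · obtain ⟨j, hj⟩ := h
          have hk : k = 2*j := by omega
          subst hk
          have e1 : 2*j/2 = j := by omega
          simp only [even_two_mul, if_pos, e1]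
          exact hμeven j
        · obtain ⟨j, hj⟩ := h
          subst hj
          have h1 : ¬ Even (2*j+1) := by simp [Nat.even_add_one]
          have e1 : (2*j+1)/2 = j := by omega
          simp only [h1, if_neg, not_false_iff, e1]
          rw [measure_union (hdisjE j) (hEm j), hEμ j,
            add_tsub_cancel_of_le ((hμeven j).le.trans (htgtmono (by omega)))]
    · intro k
      have h1 : Even (2*k) := even_two_mul k
      have h2 : 2*k/2 = k := by omega
      simp [h1, h2]
  -- build the tower
  set step : ∀ n, {g : ℕ → Set Ω // P n g} → {g // P (n+1) g} := fun n g =>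
    ⟨Classical.choose (stepex n g.1 g.2), (Classical.choose_spec (stepex n g.1 g.2)).1⟩
    with hstepdef
  set G : ∀ n : ℕ, {g : ℕ → Set Ω // P n g} := fun n =>
    Nat.rec ⟨_, hbase⟩ step n with hG
  set D : ℕ → ℕ → Set Ω := fun n k => (G n).1 k with hD
  have href : ∀ n k, D (n+1) (2*k) = D n k := by
    intro n k
    have : G (n+1) = step n (G n) := rfl
    rw [hD]
    simp only [this, hstepdef]
    exact (Classical.choose_spec (stepex n (G n).1 (G n).2)).2 k
  have hDm : ∀ n k, MeasurableSet (D n k) := fun n k => (G n).2.1 k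
  have hDA : ∀ n k, D n k ⊆ A := fun n k => (G n).2.2.1 k
  have hDmono : ∀ n, Monotone (D n) := fun n =>
    monotone_nat_of_le_succ fun k => (G n).2.2.2.1 k
  have hDμ : ∀ n k, μ (D n k) = min ((k : ℝ≥0∞) * μ A / 2 ^ n) (μ A) :=
    fun n k => (G n).2.2.2.2 k
  have hlift : ∀ n k p, D n k = D (n+p) (2^p * k) := by
    intro n k p
    induction p with
    | zero => simp
    | succ p ih =>
      rw [ih, show n + (p+1) = (n+p)+1 by ring, show 2^(p+1)*k = 2*(2^p*k) by ring,
        href]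
  have htotal : ∀ (n k m j : ℕ), D n k ⊆ D m j ∨ D m j ⊆ D n k := by
    intro n k m j
    have h1 : D n k = D (n+m) (2^m * k) := hlift n k m
    have h2 : D m j = D (n+m) (2^n * j) := by rw [hlift m j n, add_comm]
    rcases le_total (2^m * k) (2^n * j) with h | h
    · left; rw [h1, h2]; exact hDmono _ h
    · right; rw [h1, h2]; exact hDmono _ h
  have hD01 : D 0 1 = A := by
    have : G 0 = ⟨_, hbase⟩ := rfl
    rw [hD]; simp [this]
  -- values
  set v : ℕ × ℕ → ℝ := fun p => (p.2 : ℝ) * L / 2 ^ p.1 with hv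
  have hv0 : ∀ p, 0 ≤ v p := fun p => by
    rw [hv]; positivity
  set V : Ω → Set ℝ := fun ω => {t | ∃ p : ℕ × ℕ, ω ∈ D p.1 p.2 ∧ t = v p} with hV
  have hVbdd : ∀ ω, BddBelow (V ω) := fun ω => ⟨0, fun t ht => by
    obtain ⟨p, _, rfl⟩ := ht; exact hv0 p⟩
  have hVne : ∀ ω ∈ A, (V ω).Nonempty := fun ω hω =>
    ⟨v (0,1), ⟨(0,1), by rwa [hD01], rfl⟩⟩
  have hVempty : ∀ ω, ω ∉ A → V ω = ∅ := by
    intro ω hω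
    ext t
    simp only [hV, Set.mem_setOf_eq, Set.mem_empty_iff_false, iff_false, not_exists]
    rintro p ⟨hp, -⟩
    exact hω (hDA p.1 p.2 hp)
  set τ : Ω → ℝ := fun ω => sInf (V ω) with hτ
  have hτ_notA : ∀ ω, ω ∉ A → τ ω = 0 := by
    intro ω hω
    rw [hτ]
    simp [hVempty ω hω, Real.sInf_empty]
  have hτ0 : ∀ ω, 0 ≤ τ ω := by
    intro ω
    rcases Set.eq_empty_or_nonempty (V ω) with h | h
    · rw [hτ]; simp [h, Real.sInf_empty]
    · exact le_csInf h (fun t ht => by obtain ⟨p, _, rfl⟩ := ht; exact hv0 p)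
  -- level sets
  set U : ℝ → Set Ω := fun t => ⋃ p : {p : ℕ × ℕ // v p < t}, D p.1.1 p.1.2 with hU
  have hUm : ∀ t, MeasurableSet (U t) := fun t =>
    MeasurableSet.iUnion fun p => hDm p.1.1 p.1.2
  have hUA : ∀ t, U t ⊆ A := fun t => Set.iUnion_subset fun p => hDA p.1.1 p.1.2
  have hmemU : ∀ t (ω : Ω), ω ∈ A → (τ ω < t ↔ ω ∈ U t) := by
    intro t ω hω
    constructor
    · intro h
      obtain ⟨a, ha, halt⟩ := (csInf_lt_iff (hVbdd ω) (hVne ω hω)).1 h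
      obtain ⟨p, hp, rfl⟩ := ha
      exact Set.mem_iUnion.2 ⟨⟨p, halt⟩, hp⟩
    · intro h
      obtain ⟨p, hp⟩ := Set.mem_iUnion.1 h
      exact lt_of_le_of_lt (csInf_le (hVbdd ω) ⟨p.1, hp, rfl⟩) p.2
  have hlevel : ∀ t : ℝ, {ω | τ ω < t} = U t ∪ (if 0 < t then Aᶜ else ∅) := by
    intro t
    ext ω
    by_cases hω : ω ∈ A
    · simp only [Set.mem_setOf_eq, hmemU t ω hω, Set.mem_union]
      constructor
      · exact Or.inl
      · rintro (h | h)
        · exact h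
        · by_cases h0 : 0 < t <;> simp [h0] at h
          exact absurd hω h
    · simp only [Set.mem_setOf_eq, hτ_notA ω hω, Set.mem_union]
      by_cases h0 : 0 < t
      · simp only [h0, if_pos, Set.mem_compl_iff]
        exact ⟨fun _ => Or.inr hω, fun _ => trivial⟩
      · simp only [h0, if_neg, not_false_iff, Set.mem_empty_iff_false, or_false]
        exact ⟨fun h => h.elim, fun h => absurd (hUA t h) hω⟩
  have hτm : Measurable τ := by
    apply measurable_of_Iio
    intro t
    have : τ ⁻¹' (Set.Iio t) = {ω | τ ω < t} := rfl
    rw [this, hlevel]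
    refine (hUm t).union ?_
    by_cases h0 : 0 < t <;> simp [h0, hA.compl]
  refine ⟨τ, hτm, hτ0, ?_⟩
  intro t ht
  have hAU : A ∩ {ω | τ ω < t} = U t := by
    rw [hlevel]
    rw [Set.inter_union_distrib_left]
    have h1 : A ∩ U t = U t := Set.inter_eq_self_of_subset_right (hUA t)
    have h2 : A ∩ (if 0 < t then Aᶜ else ∅) = ∅ := by
      by_cases h0 : 0 < t <;> simp [h0]
    rw [h1, h2, Set.union_empty]
  rw [hAU]
  rcases le_or_gt t 0 with ht0 | ht0
  · have : U t = ∅ := by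
      rw [hU]
      refine Set.iUnion_eq_empty.2 fun p => absurd (lt_of_le_of_lt (hv0 p.1) p.2) ?_
      exact not_lt.2 ht0
    rw [this]
    simp [ENNReal.ofReal_eq_zero.2 ht0]
  · -- 0 < t ≤ L
    have hdir : Directed (· ⊆ ·) (fun p : {p : ℕ × ℕ // v p < t} => D p.1.1 p.1.2) := by
      intro p q
      rcases htotal p.1.1 p.1.2 q.1.1 q.1.2 with h | h
      · exact ⟨q, h, subset_rfl⟩
      · exact ⟨p, subset_rfl, h⟩
    have hμU : μ (U t) = ⨆ p : {p : ℕ × ℕ // v p < t}, μ (D p.1.1 p.1.2) :=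
      Directed.measure_iUnion hdir
    have hμD : ∀ p : {p : ℕ × ℕ // v p < t}, μ (D p.1.1 p.1.2) = ENNReal.ofReal (v p.1) := by
      rintro ⟨⟨n, k⟩, hp⟩
      simp only [hv] at hp ⊢
      have hklt : (k : ℝ) < 2^n := by
        have h1 : (k:ℝ) * L / 2^n < L := lt_of_lt_of_le hp ht
        rw [div_lt_iff₀ (by positivity)] at h1
        have := (mul_lt_mul_iff_left₀ hLpos).1 (by linarith [h1] : (k:ℝ) * L < 2^n * L)
        exact this
      have hkle : (k : ℝ≥0∞) ≤ 2^n := by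
        have h2 : (k:ℕ) ≤ 2^n := by exact_mod_cast hklt.le
        exact_mod_cast h2
      have hmin : min ((k : ℝ≥0∞) * μ A / 2 ^ n) (μ A) = (k : ℝ≥0∞) * μ A / 2 ^ n := by
        refine min_eq_left ?_
        rw [ENNReal.div_le_iff (by positivity) (by simp), mul_comm]
        exact mul_le_mul_right hkle (μ A)
      rw [hDμ, hmin]
      rw [ENNReal.ofReal_div_of_pos (by positivity), ENNReal.ofReal_mul (by positivity),
        ENNReal.ofReal_natCast, hofL]
      congr 1
      rw [ENNReal.ofReal_pow (by norm_num)]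
      norm_num
    rw [hμU]
    simp only [hμD]
    apply le_antisymm
    · exact iSup_le fun p => ENNReal.ofReal_le_ofReal p.2.le
    · -- density
      apply ENNReal.le_of_forall_pos_le_add
      intro δ hδ _
      have hδR : (0:ℝ) < δ := hδ
      obtain ⟨n, hn⟩ := exists_pow_lt_of_lt_one (x := (δ:ℝ)/L) (by positivity)
        (by norm_num : (1/2 : ℝ) < 1)
      have hLn : L / 2^n < δ := by
        rw [div_lt_iff₀ (by positivity)]
        rw [div_pow, one_pow] at hn
        rw [div_lt_div_iff₀ (by positivity) (by positivity)] at hn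
        nlinarith [hn]
      set x : ℝ := t * 2^n / L with hx
      have hxpos : 0 < x := by positivity
      set c : ℕ := Nat.ceil x with hc
      have hc1 : 1 ≤ c := Nat.one_le_iff_ne_zero.2 (by
        simp only [hc, ne_eq, Nat.ceil_eq_zero, not_le]
        exact hxpos)
      set k : ℕ := c - 1 with hk
      have hkc : (k : ℝ) = (c : ℝ) - 1 := by
        rw [hk, Nat.cast_sub hc1, Nat.cast_one]
      have hupper : (k:ℝ) < x := by
        rw [hkc]
        have := Nat.ceil_lt_add_one hxpos.le
        linarith [this]
      have hlower : x - 1 ≤ (k:ℝ) := by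
        rw [hkc]
        have := Nat.le_ceil x
        linarith [this]
      have hxLt : x * L = t * 2^n := by
        rw [hx]; field_simp
      have hvlt : v (n, k) < t := by
        simp only [hv]
        rw [div_lt_iff₀ (by positivity)]
        calc (k:ℝ) * L < x * L := by nlinarith [hupper, hLpos]
        _ = t * 2^n := hxLt
      have hvgt : t - δ < v (n, k) := by
        simp only [hv]
        rw [lt_div_iff₀ (by positivity)]
        have h2 : (x - 1) * L = t * 2^n - L := by
          rw [sub_mul, hxLt, one_mul]
        have h3 : (x-1) * L ≤ (k:ℝ) * L := mul_le_mul_of_nonneg_right hlower hLpos.le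
        have h4 : L < (δ:ℝ) * 2^n := by
          rw [div_lt_iff₀ (by positivity)] at hLn
          linarith [hLn]
        rw [sub_mul]
        linarith [h2, h3, h4]
      calc ENNReal.ofReal t ≤ ENNReal.ofReal (v (n,k) + δ) :=
            ENNReal.ofReal_le_ofReal (by linarith [hvgt])
      _ ≤ ENNReal.ofReal (v (n,k)) + ENNReal.ofReal δ := ENNReal.ofReal_add_le
      _ ≤ (⨆ p : {p : ℕ × ℕ // v p < t}, ENNReal.ofReal (v p.1)) + δ := by
          gcongr
          · exact le_iSup (fun p : {p : ℕ × ℕ // v p < t} => ENNReal.ofReal (v p.1))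
              ⟨(n,k), hvlt⟩
          · simp

end Helpers

/-- Lemma 3: For an atomless probability measure `P1` and integrable `Z`,
every set `A` of positive measure contains, for each `ε ∈ (0, P1 A]`, a subset of
measure exactly `ε` with the same conditional mean of `Z` as `A`. -/
theorem exists_subset_same_conditional_mean {Ω : Type*} [MeasurableSpace Ω]
    (P1 : Measure Ω) [IsProbabilityMeasure P1]
    (hatomless : ∀ A : Set Ω, MeasurableSet A → 0 < P1 A →
      ∃ B ⊆ A, MeasurableSet B ∧ 0 < P1 B ∧ P1 B < P1 A)
    (Z : Ω → ℝ) (hZ : Integrable Z P1) :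
    ∀ A : Set Ω, MeasurableSet A → 0 < P1 A →
      ∀ ε : ℝ≥0∞, 0 < ε → ε ≤ P1 A →
        ∃ B ⊆ A, MeasurableSet B ∧ P1 B = ε ∧
          (∫ ω in B, Z ω ∂P1) / (P1 B).toReal = (∫ ω in A, Z ω ∂P1) / (P1 A).toReal := by
  have hsier : ∀ A : Set Ω, MeasurableSet A → ∀ ε : ℝ≥0∞, ε ≤ P1 A →
      ∃ B ⊆ A, MeasurableSet B ∧ P1 B = ε :=
    my_sierpinski hatomless (my_small hatomless)
  intro A hA hApos ε hεpos hεle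
  -- replace Z by a strongly measurable representative
  set Z' : Ω → ℝ := hZ.1.mk Z with hZ'def
  have hZ'sm : StronglyMeasurable Z' := hZ.1.stronglyMeasurable_mk
  have hZZ' : Z =ᵐ[P1] Z' := hZ.1.ae_eq_mk
  have hZ'm : Measurable Z' := hZ'sm.measurable
  have hZ'int : Integrable Z' P1 := hZ.congr hZZ'
  have hsetint : ∀ B : Set Ω, (∫ ω in B, Z ω ∂P1) = ∫ ω in B, Z' ω ∂P1 := by
    intro B
    exact integral_congr_ae (ae_restrict_of_ae hZZ')
  -- basic constants
  set L : ℝ := (P1 A).toReal with hLdef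
  have hAfin : P1 A ≠ ∞ := measure_ne_top P1 A
  have hεfin : ε ≠ ∞ := (hεle.trans_lt hAfin.lt_top).ne
  have hLpos : 0 < L := ENNReal.toReal_pos hApos.ne' hAfin
  have hofL : ENNReal.ofReal L = P1 A := ENNReal.ofReal_toReal hAfin
  set ε' : ℝ := ε.toReal with hε'def
  have hε'pos : 0 < ε' := ENNReal.toReal_pos hεpos.ne' hεfin
  have hε'le : ε' ≤ L := ENNReal.toReal_mono hAfin hεle
  have hofε : ENNReal.ofReal ε' = ε := ENNReal.ofReal_toReal hεfin
  -- the uniformizing function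
  obtain ⟨τ, hτm, hτ0, hτμ⟩ := my_tau hsier A hA hApos
  have hψ : ∀ s : ℝ, P1 (A ∩ {ω | τ ω < s}) = ENNReal.ofReal (min s L) := by
    intro s
    rcases le_or_gt s L with h | h
    · rw [min_eq_left h]; exact hτμ s h
    · rw [min_eq_right h.le]
      apply le_antisymm
      · rw [hofL]; exact measure_mono Set.inter_subset_left
      · rw [← hτμ L le_rfl]
        exact measure_mono (Set.inter_subset_inter_right _ (fun ω hω => lt_trans hω h))
  have hmono_set : ∀ s s' : ℝ, s ≤ s' →
      A ∩ {ω | τ ω < s} ⊆ A ∩ {ω | τ ω < s'} := fun s s' h =>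
    Set.inter_subset_inter_right _ (fun ω hω => lt_of_lt_of_le hω h)
  have hsetm : ∀ s : ℝ, MeasurableSet {ω | τ ω < s} := fun s =>
    measurableSet_lt hτm measurable_const
  have hnull : ∀ c : ℝ, P1 (A ∩ {ω | τ ω = c}) = 0 := by
    intro c
    refine le_antisymm ?_ zero_le
    refine ENNReal.le_of_forall_pos_le_add fun δ hδ _ => ?_
    rw [zero_add]
    have hsub : A ∩ {ω | τ ω = c} ⊆
        (A ∩ {ω | τ ω < c + δ}) \ (A ∩ {ω | τ ω < c}) := by
      rintro ω ⟨hω, hc⟩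
      simp only [Set.mem_setOf_eq] at hc
      constructor
      · exact ⟨hω, by
          simp only [Set.mem_setOf_eq, hc]
          have hd : (0:ℝ) < δ := hδ
          linarith⟩
      · rintro ⟨-, h⟩
        simp only [Set.mem_setOf_eq, hc] at h
        exact lt_irrefl c h
    refine (measure_mono hsub).trans ?_
    have hd : (0:ℝ) < δ := hδ
    rw [measure_diff (hmono_set c (c+δ) (by linarith)) (hA.inter (hsetm c)).nullMeasurableSet
      (measure_ne_top _ _), hψ, hψ]
    have h1 : ENNReal.ofReal (min (c+δ) L) - ENNReal.ofReal (min c L) ≤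
        ENNReal.ofReal (min (c+δ) L - min c L) := by
      rw [tsub_le_iff_right]
      calc ENNReal.ofReal (min (c+δ) L)
          = ENNReal.ofReal ((min (c+δ) L - min c L) + min c L) := by ring_nf
      _ ≤ _ := ENNReal.ofReal_add_le
    refine h1.trans ?_
    have h2 : min (c+δ) L - min c L ≤ (δ:ℝ) := by
      have hd : (0:ℝ) ≤ δ := δ.2
      simp only [min_def]
      split_ifs <;> linarith
    exact (ENNReal.ofReal_le_ofReal h2).trans (by simp)
  -- the sliding window sets
  set cond : ℝ → Ω → Prop :=
    fun t ω => (t ≤ τ ω ∧ τ ω < t + ε') ∨ (τ ω + L < t + ε') with hconddef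
  have hcondm : ∀ t : ℝ, MeasurableSet {ω | cond t ω} := by
    intro t
    refine MeasurableSet.union ?_ ?_
    · exact (measurableSet_le measurable_const hτm).inter
        (measurableSet_lt hτm measurable_const)
    · exact measurableSet_lt (hτm.add_const L) measurable_const
  set Bs : ℝ → Set Ω := fun t => A ∩ {ω | cond t ω} with hBsdef
  have hBsm : ∀ t, MeasurableSet (Bs t) := fun t => hA.inter (hcondm t)
  have hBsA : ∀ t, Bs t ⊆ A := fun t => Set.inter_subset_left
  -- measure of the window sets
  have hBsμ : ∀ t : ℝ, 0 ≤ t → t ≤ L → P1 (Bs t) = ε := by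
    intro t ht0 htL
    have hsplit : Bs t = ((A ∩ {ω | τ ω < t + ε'}) \ (A ∩ {ω | τ ω < t})) ∪
        (A ∩ {ω | τ ω < t + ε' - L}) := by
      rw [hBsdef]
      ext ω
      simp only [Set.mem_inter_iff, Set.mem_union, Set.mem_diff, Set.mem_setOf_eq, hconddef]
      constructor
      · rintro ⟨hω, ⟨h1, h2⟩ | h3⟩
        · exact Or.inl ⟨⟨hω, h2⟩, fun h => absurd h.2 (not_lt.2 h1)⟩
        · exact Or.inr ⟨hω, by linarith⟩
      · rintro (⟨⟨hω, h2⟩, h4⟩ | ⟨hω, h5⟩)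
        · refine ⟨hω, Or.inl ⟨?_, h2⟩⟩
          by_contra hcon
          exact h4 ⟨hω, by linarith [not_le.1 hcon]⟩
        · exact ⟨hω, Or.inr (by linarith)⟩
    have hdisj : Disjoint ((A ∩ {ω | τ ω < t + ε'}) \ (A ∩ {ω | τ ω < t}))
        (A ∩ {ω | τ ω < t + ε' - L}) := by
      rw [Set.disjoint_left]
      rintro ω ⟨⟨hω, h1⟩, h2⟩ ⟨-, h3⟩
      simp only [Set.mem_setOf_eq] at h1 h3
      exact h2 ⟨hω, by simp only [Set.mem_setOf_eq]; linarith⟩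
    rw [hsplit, measure_union hdisj (hA.inter (hsetm _)),
      measure_diff (hmono_set t (t+ε') (by linarith)) (hA.inter (hsetm t)).nullMeasurableSet
        (measure_ne_top _ _), hψ, hψ, hψ]
    have hmt : min t L = t := min_eq_left htL
    have hm2 : min (t + ε' - L) L = t + ε' - L := min_eq_left (by linarith)
    rw [hmt, hm2]
    rcases le_or_gt (t + ε') L with h | h
    · rw [min_eq_left h]
      have h0 : ENNReal.ofReal (t + ε' - L) = 0 := by
        rw [ENNReal.ofReal_eq_zero]; linarith
      rw [h0, add_zero, ← ENNReal.ofReal_sub _ ht0]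
      rw [show t + ε' - t = ε' by ring, hofε]
    · rw [min_eq_right h.le, ← ENNReal.ofReal_sub _ ht0,
        ← ENNReal.ofReal_add (by linarith) (by linarith), ← hofε]
      congr 1
      ring
  -- integral representation over the restricted measure
  set ν : Measure Ω := P1.restrict A with hνdef
  have hνfin : IsFiniteMeasure ν := by
    constructor
    rw [hνdef, Measure.restrict_apply_univ]
    exact hAfin.lt_top
  set g : ℝ → ℝ := fun t => ∫ ω in Bs t, Z' ω ∂P1 with hgdef
  have hgrepr : ∀ t : ℝ, g t = ∫ ω, Set.indicator {ω | cond t ω} Z' ω ∂ν := by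
    intro t
    rw [hgdef, hνdef, integral_indicator (hcondm t), Measure.restrict_restrict (hcondm t)]
    rw [hBsdef, Set.inter_comm]
  -- a.e. bounds on τ over ν
  have hae_range : ∀ᵐ ω ∂ν, 0 ≤ τ ω ∧ τ ω < L := by
    rw [hνdef, ae_restrict_iff' hA]
    have hnl : P1 (A ∩ {ω | ¬ τ ω < L}) = 0 := by
      have : A ∩ {ω | ¬ τ ω < L} = A \ (A ∩ {ω | τ ω < L}) := by
        ext ω
        constructor
        · rintro ⟨h1, h2⟩
          exact ⟨h1, fun hc => h2 hc.2⟩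
        · rintro ⟨h1, h2⟩
          exact ⟨h1, fun hc => h2 ⟨h1, hc⟩⟩
      rw [this, measure_diff Set.inter_subset_left
        (hA.inter (hsetm L)).nullMeasurableSet (measure_ne_top _ _), hψ,
        min_eq_left le_rfl, hofL, tsub_self]
    have := measure_mono_null (fun ω (h : ω ∈ {ω | ω ∈ A ∧ ¬ (0 ≤ τ ω ∧ τ ω < L)}) =>
      (⟨h.1, fun hcon => (h.2 ⟨hτ0 ω, hcon⟩)⟩ : ω ∈ A ∩ {ω | ¬ τ ω < L})) hnl
    filter_upwards [measure_eq_zero_iff_ae_notMem.1 this] with ω hω hωA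
    by_contra hcon
    exact hω ⟨hωA, hcon⟩
  -- the null boundary sets
  have hbdry : ∀ t : ℝ, ∀ᵐ ω ∂ν, τ ω ≠ t + ε' ∧ τ ω ≠ t ∧ τ ω ≠ t + ε' - L := by
    intro t
    rw [hνdef, ae_restrict_iff' hA]
    have h3 : P1 ((A ∩ {ω | τ ω = t + ε'}) ∪ (A ∩ {ω | τ ω = t}) ∪
        (A ∩ {ω | τ ω = t + ε' - L})) = 0 :=
      measure_union_null (measure_union_null (hnull _) (hnull _)) (hnull _)
    filter_upwards [measure_eq_zero_iff_ae_notMem.1 h3] with ω hω hωA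
    refine ⟨?_, ?_, ?_⟩ <;> intro hc <;> apply hω
    · exact Or.inl (Or.inl ⟨hωA, hc⟩)
    · exact Or.inl (Or.inr ⟨hωA, hc⟩)
    · exact Or.inr ⟨hωA, hc⟩
  -- continuity of g
  have hgcont : Continuous g := by
    rw [continuous_iff_seqContinuous]
    intro u t hu
    rw [show g ∘ u = fun n => ∫ ω, Set.indicator {ω | cond (u n) ω} Z' ω ∂ν from
      funext fun n => hgrepr (u n), hgrepr t]
    apply tendsto_integral_of_dominated_convergence (fun ω => ‖Z' ω‖)
    · intro n
      exact ((hZ'sm.indicator (hcondm (u n)))).aestronglyMeasurable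
    · exact (hZ'int.norm.restrict (s := A))
    · intro n
      filter_upwards with ω
      by_cases h : ω ∈ {ω | cond (u n) ω} <;> simp [h]
    · filter_upwards [hbdry t] with ω hω
      obtain ⟨h1, h2, h3⟩ := hω
      have hev : ∀ᶠ s in 𝓝 t, (cond s ω ↔ cond t ω) := by
        by_cases hc : cond t ω
        · rcases hc with ⟨ha, hb⟩ | hc2
          · have ht2 : t < τ ω := lt_of_le_of_ne ha (fun e => h2 e.symm)
            have ht1 : τ ω - ε' < t := by linarith
            filter_upwards [Ioo_mem_nhds ht1 ht2] with s hs
            exact iff_of_true (Or.inl ⟨hs.2.le, by simpa using (by linarith [hs.1] :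
              τ ω < s + ε')⟩) (Or.inl ⟨ha, hb⟩)
          · have ht1 : τ ω + L - ε' < t := by linarith
            filter_upwards [Ioi_mem_nhds ht1] with s hs
            exact iff_of_true (Or.inr (by simp only [Set.mem_Ioi] at hs; linarith))
              (Or.inr hc2)
        · have hc' := hc
          simp only [hconddef] at hc'
          push_neg at hc'
          obtain ⟨hc1, hc2⟩ := hc'
          rcases le_or_gt t (τ ω) with h | h
          · have h5 : t + ε' < τ ω := lt_of_le_of_ne (hc1 h) (fun e => h1 e.symm)
            filter_upwards [Iio_mem_nhds (show t < τ ω - ε' by linarith)] with s hs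
            simp only [Set.mem_Iio] at hs
            refine iff_of_false ?_ hc
            rintro (⟨-, hb⟩ | hcc) <;> linarith
          · have h6 : t < τ ω + L - ε' := by
              have h7 : t ≤ τ ω + L - ε' := by linarith
              exact lt_of_le_of_ne h7 (fun e => h3 (by linarith [e]))
            filter_upwards [Ioo_mem_nhds h h6] with s hs
            obtain ⟨hs1, hs2⟩ := hs
            refine iff_of_false ?_ hc
            rintro (⟨ha, -⟩ | hcc) <;> linarith
      have hev2 : ∀ᶠ n in atTop, (cond (u n) ω ↔ cond t ω) := hu.eventually hev
      apply Tendsto.congr' ?_ tendsto_const_nhds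
      filter_upwards [hev2] with n hn
      by_cases h : cond t ω
      · rw [Set.indicator_of_mem (show ω ∈ {ω | cond (u n) ω} from hn.2 h),
          Set.indicator_of_mem (show ω ∈ {ω | cond t ω} from h)]
      · rw [Set.indicator_of_notMem (show ω ∉ {ω | cond (u n) ω} from
            fun hc => h (hn.1 hc)),
          Set.indicator_of_notMem (show ω ∉ {ω | cond t ω} from h)]
  -- Fubini setup
  set ρ : Measure ℝ := volume.restrict (Set.Icc (0:ℝ) L) with hρdef
  have hCm : MeasurableSet {p : ℝ × Ω | cond p.1 p.2} := by
    simp only [hconddef]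
    refine MeasurableSet.union ?_ ?_
    · exact (measurableSet_le measurable_fst (hτm.comp measurable_snd)).inter
        (measurableSet_lt (hτm.comp measurable_snd) (measurable_fst.add_const ε'))
    · exact measurableSet_lt ((hτm.comp measurable_snd).add_const L)
        (measurable_fst.add_const ε')
  set F : ℝ → Ω → ℝ := fun t ω => Set.indicator {ω | cond t ω} Z' ω with hFdef
  have hFunc : Function.uncurry F = Set.indicator {p : ℝ × Ω | cond p.1 p.2}
      (fun p => Z' p.2) := by
    ext ⟨t, ω⟩
    by_cases h : cond t ω
    · simp only [Function.uncurry, hFdef]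
      rw [Set.indicator_of_mem (show ω ∈ {ω | cond t ω} from h),
        Set.indicator_of_mem (show (t,ω) ∈ {p : ℝ × Ω | cond p.1 p.2} from h)]
    · simp only [Function.uncurry, hFdef]
      rw [Set.indicator_of_notMem (show ω ∉ {ω | cond t ω} from h),
        Set.indicator_of_notMem (show (t,ω) ∉ {p : ℝ × Ω | cond p.1 p.2} from h)]
  have hsnd : Integrable (fun p : ℝ × Ω => Z' p.2) (ρ.prod ν) := by
    constructor
    · exact (hZ'sm.comp_measurable measurable_snd).aestronglyMeasurable
    · have hm : Measurable fun p : ℝ × Ω => ‖Z' p.2‖ₑ :=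
        (hZ'm.comp measurable_snd).enorm
      unfold HasFiniteIntegral
      rw [MeasureTheory.lintegral_prod _ hm.aemeasurable]
      have hinner : ∀ t : ℝ, (∫⁻ ω, (‖Z' ω‖₊ : ℝ≥0∞) ∂ν) = ∫⁻ ω, (‖Z' ω‖₊ : ℝ≥0∞) ∂ν :=
        fun _ => rfl
      show (∫⁻ _ : ℝ, ∫⁻ y : Ω, ‖Z' y‖ₑ ∂ν ∂ρ) < ⊤
      rw [lintegral_const]
      have h1 : (∫⁻ ω, ‖Z' ω‖ₑ ∂ν) < ∞ := (hZ'int.restrict (s := A)).2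
      have h2 : ρ Set.univ < ∞ := by
        rw [hρdef, Measure.restrict_apply_univ]
        exact (Real.volume_Icc (a := 0) (b := L) ▸ ENNReal.ofReal_lt_top)
      exact ENNReal.mul_lt_top h1 h2
  have hFint : Integrable (Function.uncurry F) (ρ.prod ν) := by
    rw [hFunc]
    exact hsnd.indicator hCm
  have hswap := integral_integral_swap hFint
  have hLHS : (∫ t, (∫ ω, F t ω ∂ν) ∂ρ) = ∫ t in Set.Icc (0:ℝ) L, g t ∂volume := by
    rw [hρdef]
    refine integral_congr_ae (Filter.Eventually.of_forall fun t => ?_)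
    rw [hgrepr t]
  have hinner : ∀ᵐ ω ∂ν, (∫ t, F t ω ∂ρ) = ε' * Z' ω := by
    filter_upwards [hae_range] with ω hr
    obtain ⟨h0, hL⟩ := hr
    have hWm : MeasurableSet {t : ℝ | cond t ω} := by
      simp only [hconddef]
      refine MeasurableSet.union ?_ ?_
      · exact (measurableSet_le measurable_id measurable_const).inter
          (measurableSet_lt measurable_const (measurable_id.add_const ε'))
      · exact measurableSet_lt measurable_const (measurable_id.add_const ε')
    have hFω : (fun t => F t ω) = Set.indicator {t : ℝ | cond t ω} (fun _ => Z' ω) := by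
      ext t
      by_cases h : cond t ω
      · simp only [hFdef]
        rw [Set.indicator_of_mem (show ω ∈ {ω | cond t ω} from h),
          Set.indicator_of_mem (show t ∈ {t | cond t ω} from h)]
      · simp only [hFdef]
        rw [Set.indicator_of_notMem (show ω ∉ {ω | cond t ω} from h),
          Set.indicator_of_notMem (show t ∉ {t | cond t ω} from h)]
    rw [hFω, hρdef, integral_indicator hWm, Measure.restrict_restrict hWm,
      setIntegral_const]
    have hvol : volume ({t : ℝ | cond t ω} ∩ Set.Icc 0 L) = ENNReal.ofReal ε' := by
      have hWset : {t : ℝ | cond t ω} = Set.Ioc (τ ω - ε') (τ ω) ∪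
          Set.Ioi (τ ω + L - ε') := by
        ext s
        simp only [hconddef, Set.mem_setOf_eq, Set.mem_union, Set.mem_Ioc, Set.mem_Ioi]
        constructor
        · rintro (⟨h1, h2⟩ | h3)
          · exact Or.inl ⟨by linarith, h1⟩
          · exact Or.inr (by linarith)
        · rintro (⟨h1, h2⟩ | h3)
          · exact Or.inl ⟨h2, by linarith⟩
          · exact Or.inr (by linarith)
      rw [hWset, Set.union_inter_distrib_right]
      have hsecond : Set.Ioi (τ ω + L - ε') ∩ Set.Icc 0 L = Set.Ioc (τ ω + L - ε') L := by
        ext x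
        simp only [Set.mem_inter_iff, Set.mem_Ioi, Set.mem_Icc, Set.mem_Ioc]
        constructor
        · rintro ⟨h1, -, h3⟩
          exact ⟨h1, h3⟩
        · rintro ⟨h1, h2⟩
          exact ⟨h1, by linarith, h2⟩
      rw [hsecond]
      have hdisj2 : Disjoint (Set.Ioc (τ ω - ε') (τ ω) ∩ Set.Icc 0 L)
          (Set.Ioc (τ ω + L - ε') L) := by
        rw [Set.disjoint_left]
        rintro x ⟨hx1, -⟩ hx2
        simp only [Set.mem_Ioc] at hx1 hx2
        linarith [hx1.2, hx2.1]
      rw [measure_union hdisj2 measurableSet_Ioc]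
      rcases le_or_gt ε' (τ ω) with hc1 | hc1
      · have hfirst : Set.Ioc (τ ω - ε') (τ ω) ∩ Set.Icc 0 L = Set.Ioc (τ ω - ε') (τ ω) := by
          refine Set.inter_eq_self_of_subset_left ?_
          rintro x hx
          simp only [Set.mem_Ioc] at hx
          exact ⟨by linarith [hx.1], by linarith [hx.2]⟩
        rw [hfirst, Real.volume_Ioc, Real.volume_Ioc]
        have he1 : τ ω - (τ ω - ε') = ε' := by ring
        have he2 : ENNReal.ofReal (L - (τ ω + L - ε')) = 0 := by
          rw [ENNReal.ofReal_eq_zero]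
          linarith
        rw [he1, he2, add_zero]
      · have hfirst : Set.Ioc (τ ω - ε') (τ ω) ∩ Set.Icc 0 L = Set.Icc 0 (τ ω) := by
          ext x
          simp only [Set.mem_inter_iff, Set.mem_Ioc, Set.mem_Icc]
          constructor
          · rintro ⟨⟨-, h2⟩, h3, -⟩
            exact ⟨h3, h2⟩
          · rintro ⟨h1, h2⟩
            exact ⟨⟨by linarith, h2⟩, h1, by linarith⟩
        rw [hfirst, Real.volume_Icc, Real.volume_Ioc,
          ← ENNReal.ofReal_add (by linarith) (by linarith)]
        congr 1
        ring
    rw [measureReal_def, hvol, ENNReal.toReal_ofReal hε'pos.le, smul_eq_mul]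
  have hRHS : (∫ ω, (∫ t, F t ω ∂ρ) ∂ν) = ε' * ∫ ω in A, Z' ω ∂P1 := by
    rw [integral_congr_ae hinner, integral_const_mul]
  have havg : ∫ t in Set.Icc (0:ℝ) L, g t ∂volume = ε' * ∫ ω in A, Z' ω ∂P1 := by
    rw [← hLHS, hswap, hRHS]
  -- extreme values and IVT
  have hIccne : (Set.Icc (0:ℝ) L).Nonempty := Set.nonempty_Icc.2 hLpos.le
  obtain ⟨a, haI, hamin⟩ := isCompact_Icc.exists_isMinOn hIccne hgcont.continuousOn
  obtain ⟨b, hbI, hbmax⟩ := isCompact_Icc.exists_isMaxOn hIccne hgcont.continuousOn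
  have hgint : IntegrableOn g (Set.Icc (0:ℝ) L) volume :=
    hgcont.continuousOn.integrableOn_compact isCompact_Icc
  have hconst : ∀ c : ℝ, ∫ _ in Set.Icc (0:ℝ) L, c ∂volume = L * c := by
    intro c
    rw [setIntegral_const, measureReal_def, Real.volume_Icc, sub_zero, ENNReal.toReal_ofReal hLpos.le,
      smul_eq_mul]
  have hlow : L * g a ≤ ε' * ∫ ω in A, Z' ω ∂P1 := by
    rw [← havg, ← hconst (g a)]
    exact setIntegral_mono_on
      (integrableOn_const (by rw [Real.volume_Icc]; exact ENNReal.ofReal_ne_top))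
      hgint measurableSet_Icc (fun x hx => hamin hx)
  have hhigh : ε' * (∫ ω in A, Z' ω ∂P1) ≤ L * g b := by
    rw [← havg, ← hconst (g b)]
    exact setIntegral_mono_on hgint
      (integrableOn_const (by rw [Real.volume_Icc]; exact ENNReal.ofReal_ne_top))
      measurableSet_Icc (fun x hx => hbmax hx)
  set tgt : ℝ := ε' * (∫ ω in A, Z' ω ∂P1) / L with htgt
  have h1 : g a ≤ tgt := by
    rw [htgt, le_div_iff₀ hLpos]
    linarith [hlow]
  have h2 : tgt ≤ g b := by
    rw [htgt, div_le_iff₀ hLpos]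
    linarith [hhigh]
  have hmem : tgt ∈ Set.uIcc (g a) (g b) := Set.mem_uIcc.2 (Or.inl ⟨h1, h2⟩)
  have hsubI : Set.uIcc a b ⊆ Set.Icc 0 L := by
    rw [← Set.uIcc_of_le hLpos.le]
    exact Set.uIcc_subset_uIcc (by rwa [Set.uIcc_of_le hLpos.le])
      (by rwa [Set.uIcc_of_le hLpos.le])
  obtain ⟨t₀, ht₀mem, hgt₀⟩ := intermediate_value_uIcc
    (hgcont.continuousOn.mono (hsubI.trans (fun x hx => hx))) hmem
  have ht₀ : t₀ ∈ Set.Icc (0:ℝ) L := hsubI ht₀mem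
  -- conclusion
  refine ⟨Bs t₀, hBsA t₀, hBsm t₀, hBsμ t₀ ht₀.1 ht₀.2, ?_⟩
  rw [hsetint, hsetint, hBsμ t₀ ht₀.1 ht₀.2]
  have hg0 : (∫ ω in Bs t₀, Z' ω ∂P1) = tgt := hgt₀
  rw [hg0, htgt]

  field_simp
  rw [← hε'def, mul_comm ε', mul_div_assoc, div_self hε'pos.ne', mul_one]
end

section
/- Let P be an atomless probability measure and Z a bounded measurable function into ℝ². Fix δ > 0 and a set A with P(A) > 0. Then for every ε ∈ (0, P(A)], there exists A_ε ⊆ A with P(A_ε) = ε and ‖z(A_ε) − z(A)‖_∞ < δ, where z(B) denotes the conditional expectation vector E[Z | B]. -/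
open MeasureTheory
open scoped ENNReal

lemma exists_small_subset {Ω : Type*} [MeasurableSpace Ω]
    (P : Measure Ω) [IsProbabilityMeasure P]
    (hatomless : ∀ A : Set Ω, MeasurableSet A → 0 < P A →
      ∃ B ⊆ A, MeasurableSet B ∧ 0 < P B ∧ P B < P A)
    (S : Set Ω) (hS : MeasurableSet S) (hSpos : 0 < P S)
    (η : ℝ≥0∞) (hη : 0 < η) :
    ∃ B ⊆ S, MeasurableSet B ∧ 0 < P B ∧ P B ≤ η := by
  have key : ∀ n : ℕ, ∃ B ⊆ S, MeasurableSet B ∧ 0 < P B ∧ P B ≤ 2⁻¹ ^ n := by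
    intro n
    induction n with
    | zero => exact ⟨S, subset_rfl, hS, hSpos, by simpa using prob_le_one⟩
    | succ n ih =>
      obtain ⟨B, hBS, hBm, hBpos, hBle⟩ := ih
      obtain ⟨C, hCB, hCm, hCpos, hClt⟩ := hatomless B hBm hBpos
      have hpow : (2⁻¹ : ℝ≥0∞) ^ (n + 1) = 2⁻¹ ^ n / 2 := by
        rw [pow_succ, ENNReal.div_eq_inv_mul, mul_comm]
      rcases le_or_gt (P C) (P B / 2) with h | h
      · refine ⟨C, hCB.trans hBS, hCm, hCpos, ?_⟩
        rw [hpow]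
        exact h.trans (ENNReal.div_le_div_right hBle 2)
      · refine ⟨B \ C, (Set.diff_subset).trans hBS, hBm.diff hCm, ?_, ?_⟩
        · rw [measure_diff hCB hCm.nullMeasurableSet (measure_ne_top P C)]
          exact tsub_pos_of_lt hClt
        · rw [measure_diff hCB hCm.nullMeasurableSet (measure_ne_top P C), hpow]
          calc P B - P C ≤ P B - P B / 2 := tsub_le_tsub_left h.le _
            _ = P B / 2 := ENNReal.sub_half (measure_ne_top P B)
            _ ≤ 2⁻¹ ^ n / 2 := ENNReal.div_le_div_right hBle 2
  obtain ⟨n, hn⟩ := ENNReal.exists_inv_two_pow_lt hη.ne'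
  obtain ⟨B, hBS, hBm, hBpos, hBle⟩ := key n
  exact ⟨B, hBS, hBm, hBpos, hBle.trans hn.le⟩

lemma sierpinski_subset {Ω : Type*} [MeasurableSpace Ω]
    (P : Measure Ω) [IsProbabilityMeasure P]
    (hatomless : ∀ A : Set Ω, MeasurableSet A → 0 < P A →
      ∃ B ⊆ A, MeasurableSet B ∧ 0 < P B ∧ P B < P A)
    (S : Set Ω) (hS : MeasurableSet S) (r : ℝ≥0∞) (hr : r ≤ P S) :
    ∃ B ⊆ S, MeasurableSet B ∧ P B = r := by
  classical
  set G := {U : Set Ω // U ⊆ S ∧ MeasurableSet U ∧ P U ≤ r} with hG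
  have step : ∀ u : G, ∃ u' : G, u.1 ⊆ u'.1 ∧
      ∀ C, C ⊆ S → Disjoint C u.1 → MeasurableSet C → P u.1 + P C ≤ r →
        P u.1 + P C / 2 ≤ P u'.1 := by
    rintro ⟨U, hUS, hUm, hUr⟩
    set t := sSup {m | ∃ C, C ⊆ S ∧ Disjoint C U ∧ MeasurableSet C ∧ P U + P C ≤ r ∧ P C = m}
      with ht
    have htle : t ≤ r := by
      apply sSup_le
      rintro m ⟨C, _, _, _, hle, rfl⟩
      exact le_trans (le_add_self) hle
    have htne : t ≠ ∞ := (htle.trans_lt (hr.trans_lt (measure_lt_top P S))).ne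
    rcases eq_or_lt_of_le (zero_le : 0 ≤ t) with h0 | h0
    · refine ⟨⟨U, hUS, hUm, hUr⟩, subset_rfl, ?_⟩
      intro C hCS hCd hCm hCr
      have : P C ≤ t := le_sSup ⟨C, hCS, hCd, hCm, hCr, rfl⟩
      have hC0 : P C = 0 := le_antisymm (this.trans h0.symm.le) zero_le
      simp [hC0]
    · have hhalf : t / 2 < t := ENNReal.half_lt_self h0.ne' htne
      obtain ⟨m, ⟨C, hCS, hCd, hCm, hCr, rfl⟩, hm⟩ := lt_sSup_iff.mp hhalf
      have hunion : P (U ∪ C) = P U + P C := by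
        rw [Set.union_comm, measure_union hCd hUm, add_comm]
      refine ⟨⟨U ∪ C, Set.union_subset hUS hCS, hUm.union hCm, by rw [hunion]; exact hCr⟩,
        Set.subset_union_left, ?_⟩
      intro C' hC'S hC'd hC'm hC'r
      have h1 : P C' ≤ t := le_sSup ⟨C', hC'S, hC'd, hC'm, hC'r, rfl⟩
      have h2 : P C' / 2 ≤ P C := le_trans (ENNReal.div_le_div_right h1 2) hm.le
      simp only [hunion]
      exact add_le_add_right h2 _
  choose next hnext1 hnext2 using step
  set u0 : G := ⟨∅, Set.empty_subset _, MeasurableSet.empty, by simp⟩ with hu0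
  set seq : ℕ → G := fun n => next^[n] u0 with hseq
  have hseq_succ : ∀ n, seq (n + 1) = next (seq n) := by
    intro n; simp [hseq, Function.iterate_succ_apply']
  have hmono : Monotone fun n => (seq n).1 := by
    apply monotone_nat_of_le_succ
    intro n; rw [hseq_succ n]; exact hnext1 (seq n)
  set U := ⋃ n, (seq n).1 with hU
  have hUm : MeasurableSet U := MeasurableSet.iUnion fun n => (seq n).2.2.1
  have hUS : U ⊆ S := Set.iUnion_subset fun n => (seq n).2.1
  have hPU : P U = ⨆ n, P (seq n).1 := by
    rw [hU]; exact hmono.directed_le.measure_iUnion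
  have hUr : P U ≤ r := by
    rw [hPU]; exact iSup_le fun n => (seq n).2.2.2
  rcases hUr.lt_or_eq with hlt | heq
  · exfalso
    have hdiffpos : 0 < P (S \ U) := by
      by_contra h
      push_neg at h
      have h0 : P (S \ U) = 0 := le_antisymm h zero_le
      have : P S ≤ P U := by
        calc P S ≤ P (S ∩ U) + P (S \ U) := measure_le_inter_add_diff P S U
          _ = P (S ∩ U) := by rw [h0, add_zero]
          _ ≤ P U := measure_mono Set.inter_subset_right
      exact absurd (hr.trans this) hlt.not_ge
    obtain ⟨C, hCSU, hCm, hCpos, hCle⟩ :=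
      exists_small_subset P hatomless (S \ U) (hS.diff hUm) hdiffpos (r - P U)
        (tsub_pos_of_lt hlt)
    have hCS : C ⊆ S := hCSU.trans Set.diff_subset
    have hCd : ∀ n, Disjoint C (seq n).1 := by
      intro n
      exact Set.disjoint_of_subset_left hCSU
        (Set.disjoint_sdiff_left.mono_right (Set.subset_iUnion (fun n => (seq n).1) n))
    have hstep : ∀ n, P (seq n).1 + P C / 2 ≤ P (seq (n + 1)).1 := by
      intro n
      rw [hseq_succ n]
      apply hnext2 (seq n) C hCS (hCd n) hCm
      calc P (seq n).1 + P C ≤ P U + (r - P U) :=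
            add_le_add (measure_mono (Set.subset_iUnion (fun n => (seq n).1) n)) hCle
        _ = r := add_tsub_cancel_of_le hlt.le
    set c := P C / 2 with hc
    have hcpos : c ≠ 0 := by
      simp only [hc, ne_eq, ENNReal.div_eq_zero_iff]
      push_neg
      exact ⟨hCpos.ne', ENNReal.ofNat_ne_top⟩
    have hcne : c ≠ ∞ := by
      simp only [hc]
      exact (ENNReal.div_lt_top (measure_ne_top P C) (by norm_num)).ne
    have hlb : ∀ n : ℕ, (n : ℝ≥0∞) * c ≤ P (seq n).1 := by
      intro n
      induction n with
      | zero => simp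
      | succ n ih =>
        push_cast
        calc ((n : ℝ≥0∞) + 1) * c = (n : ℝ≥0∞) * c + c := by ring
          _ ≤ P (seq n).1 + c := add_le_add_left ih c
          _ ≤ P (seq (n + 1)).1 := hstep n
    obtain ⟨n, hn⟩ := ENNReal.exists_nat_gt
      (r := 1 / c) ((ENNReal.div_lt_top ENNReal.one_ne_top hcpos).ne)
    have h1 : (1 : ℝ≥0∞) < n * c := by
      calc (1 : ℝ≥0∞) = 1 / c * c := (ENNReal.div_mul_cancel hcpos hcne).symm
        _ < n * c := by
            rw [ENNReal.mul_lt_mul_iff_left hcpos hcne]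
            exact hn
    have h2 : P (seq n).1 ≤ 1 := prob_le_one
    exact absurd ((h1.trans_le (hlb n)).trans_le h2) (lt_irrefl 1).elim
  · exact ⟨U, hUS, hUm, heq⟩

/-- For an atomless probability measure `P` and a bounded `ℝ²`-valued `Z`,
every set `A` of positive measure contains, for each `ε ∈ (0, P A]`, a subset of measure
exactly `ε` whose conditional mean vector is within `δ` (sup norm) of that of `A`. -/
theorem exists_subset_close_conditional_mean {Ω : Type*} [MeasurableSpace Ω]
    (P : Measure Ω) [IsProbabilityMeasure P]
    (hatomless : ∀ A : Set Ω, MeasurableSet A → 0 < P A →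
      ∃ B ⊆ A, MeasurableSet B ∧ 0 < P B ∧ P B < P A)
    (Z : Ω → ℝ × ℝ) (hZm : Measurable Z) (M : ℝ) (hZb : ∀ ω, ‖Z ω‖ ≤ M)
    (δ : ℝ) (hδ : 0 < δ) (A : Set Ω) (hA : MeasurableSet A) (hApos : 0 < P A) :
    ∀ ε : ℝ≥0∞, 0 < ε → ε ≤ P A →
      ∃ B ⊆ A, MeasurableSet B ∧ P B = ε ∧
        ‖(P B).toReal⁻¹ • (∫ ω in B, Z ω ∂P) - (P A).toReal⁻¹ • (∫ ω in A, Z ω ∂P)‖ < δ := by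
  intro ε hε0 hεA
  classical
  -- setup
  have hANe : A.Nonempty := by
    rcases A.eq_empty_or_nonempty with h | h
    · rw [h] at hApos; simp at hApos
    · exact h
  have hM0 : 0 ≤ M := le_trans (norm_nonneg _) (hZb hANe.choose)
  set h : ℝ := δ / 4 with hh
  have hhpos : 0 < h := by positivity
  set k : Ω → ℤ × ℤ := fun ω => (⌊(Z ω).1 / h⌋, ⌊(Z ω).2 / h⌋) with hk
  have hkm : Measurable k :=
    ((hZm.fst.div_const h).floor).prodMk ((hZm.snd.div_const h).floor)
  set N : ℤ := ⌈M / h⌉ + 1 with hN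
  set T : Finset (ℤ × ℤ) := Finset.Icc (-N, -N) (N, N) with hT
  have floorbound : ∀ x : ℝ, |x| ≤ M → -N ≤ ⌊x / h⌋ ∧ ⌊x / h⌋ ≤ N := by
    intro x hx
    obtain ⟨hx1, hx2⟩ := abs_le.mp hx
    have hdiv1 : x / h ≤ M / h := by gcongr
    have hdiv2 : -(M / h) ≤ x / h := by
      rw [← neg_div]; gcongr
    constructor
    · rw [Int.le_floor, hN]
      push_cast
      have := Int.le_ceil (M / h)
      linarith
    · have h1 : (⌊x / h⌋ : ℝ) ≤ (N : ℝ) := by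
        rw [hN]
        push_cast
        have h2 := Int.floor_le (x / h)
        have h3 := Int.le_ceil (M / h)
        linarith
      exact_mod_cast h1
  have habs : ∀ ω, |(Z ω).1| ≤ M ∧ |(Z ω).2| ≤ M := by
    intro ω
    constructor
    · simpa [Real.norm_eq_abs] using le_trans (norm_fst_le (Z ω)) (hZb ω)
    · simpa [Real.norm_eq_abs] using le_trans (norm_snd_le (Z ω)) (hZb ω)
  have hkT : ∀ ω, k ω ∈ T := by
    intro ω
    obtain ⟨h1, h2⟩ := habs ω
    obtain ⟨a1, a2⟩ := floorbound _ h1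
    obtain ⟨b1, b2⟩ := floorbound _ h2
    simp only [hT, Finset.mem_Icc, hk, Prod.mk_le_mk]
    exact ⟨⟨a1, b1⟩, ⟨a2, b2⟩⟩
  set v : ℤ × ℤ → ℝ × ℝ := fun i => (h * i.1, h * i.2) with hv
  have hclose : ∀ (i : ℤ × ℤ) (ω : Ω), k ω = i → ‖Z ω - v i‖ ≤ h := by
    intro i ω hki
    have comp : ∀ x : ℝ, |x - h * ⌊x / h⌋| ≤ h := by
      intro x
      have h1 : h * ⌊x / h⌋ ≤ x := by
        calc h * (⌊x / h⌋ : ℝ) ≤ h * (x / h) :=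
              mul_le_mul_of_nonneg_left (Int.floor_le _) hhpos.le
          _ = x := by field_simp
      have h2 : x - h * ⌊x / h⌋ ≤ h := by
        have := Int.sub_one_lt_floor (x / h)
        have h3 : x / h - 1 ≤ (⌊x / h⌋ : ℝ) := this.le
        have := mul_le_mul_of_nonneg_left h3 hhpos.le
        have h4 : h * (x / h) = x := by field_simp
        nlinarith
      rw [abs_sub_le_iff]
      constructor <;> linarith
    rw [← hki]
    rw [Prod.norm_def]
    simp only [hk, hv, Real.norm_eq_abs]
    exact max_le (comp _) (comp _)
  set As : ℤ × ℤ → Set Ω := fun i => A ∩ k ⁻¹' {i} with hAs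
  have hAsm : ∀ i, MeasurableSet (As i) := fun i => hA.inter (hkm (measurableSet_singleton i))
  have hAsdisj : (↑T : Set (ℤ × ℤ)).Pairwise (Function.onFun Disjoint As) := by
    intro i _ j _ hij
    simp only [Function.onFun, hAs]
    apply Set.disjoint_of_subset Set.inter_subset_right Set.inter_subset_right
    exact Set.disjoint_iff.mpr (fun ω ⟨h1, h2⟩ => hij (by simp at h1 h2; rw [← h1, ← h2]))
  have hAunion : ⋃ i ∈ T, As i = A := by
    apply Set.Subset.antisymm
    · exact Set.iUnion₂_subset fun i _ => Set.inter_subset_left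
    · intro ω hω
      exact Set.mem_biUnion (hkT ω) ⟨hω, rfl⟩
  have hAsum : ∑ i ∈ T, P (As i) = P A := by
    rw [← measure_biUnion_finset hAsdisj (fun i _ => hAsm i), hAunion]
  -- pick pieces
  have hPAne : P A ≠ ∞ := measure_ne_top P A
  have hpiece : ∀ i : ℤ × ℤ, ∃ B ⊆ As i, MeasurableSet B ∧ P B = ε * P (As i) / P A := by
    intro i
    apply sierpinski_subset P hatomless _ (hAsm i)
    calc ε * P (As i) / P A = ε / P A * P (As i) := by
          rw [div_eq_mul_inv, div_eq_mul_inv]; ring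
      _ ≤ 1 * P (As i) :=
          mul_le_mul_left (ENNReal.div_le_of_le_mul (by simpa using hεA)) _
      _ = P (As i) := one_mul _
  choose Bs hBs1 hBs2 hBs3 using hpiece
  have hBsdisj : (↑T : Set (ℤ × ℤ)).Pairwise (Function.onFun Disjoint Bs) := by
    intro i hi j hj hij
    exact (hAsdisj hi hj hij).mono (hBs1 i) (hBs1 j)
  set B : Set Ω := ⋃ i ∈ T, Bs i with hB
  have hBm : MeasurableSet B := T.measurableSet_biUnion fun i _ => hBs2 i
  have hBA : B ⊆ A := Set.iUnion₂_subset fun i _ => (hBs1 i).trans Set.inter_subset_left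
  have hPB : P B = ε := by
    rw [hB, measure_biUnion_finset hBsdisj (fun i _ => hBs2 i)]
    have : ∀ i ∈ T, P (Bs i) = ε / P A * P (As i) := by
      intro i _
      rw [hBs3 i, div_eq_mul_inv, div_eq_mul_inv]; ring
    rw [Finset.sum_congr rfl this, ← Finset.mul_sum, hAsum,
      ENNReal.div_mul_cancel hApos.ne' hPAne]
  refine ⟨B, hBA, hBm, hPB, ?_⟩
  -- real-valued analysis
  have hεne : ε ≠ ∞ := (hεA.trans_lt (measure_lt_top P A)).ne
  set εR : ℝ := ε.toReal with hεR
  set PAR : ℝ := (P A).toReal with hPAR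
  have hεRpos : 0 < εR := ENNReal.toReal_pos hε0.ne' hεne
  have hPARpos : 0 < PAR := ENNReal.toReal_pos hApos.ne' hPAne
  set c : ℝ := εR / PAR with hc
  have hcpos : 0 < c := by positivity
  have hZi : Integrable Z P :=
    (integrable_const M).mono' hZm.aestronglyMeasurable (Filter.Eventually.of_forall hZb)
  have hPBsR : ∀ i, (P (Bs i)).toReal = c * (P (As i)).toReal := by
    intro i
    rw [hBs3 i, hc, hεR, hPAR]
    rw [ENNReal.toReal_div, ENNReal.toReal_mul]
    ring
  have hIntB : (∫ ω in B, Z ω ∂P) = ∑ i ∈ T, ∫ ω in Bs i, Z ω ∂P := by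
    rw [hB]
    exact integral_biUnion_finset T (fun i _ => hBs2 i) hBsdisj (fun i _ => hZi.integrableOn)
  have hIntA : (∫ ω in A, Z ω ∂P) = ∑ i ∈ T, ∫ ω in As i, Z ω ∂P := by
    rw [← hAunion]
    exact integral_biUnion_finset T (fun i _ => hAsm i) hAsdisj (fun i _ => hZi.integrableOn)
  -- error bound on each piece
  have hpieceerr : ∀ (S : Set Ω) (i : ℤ × ℤ), MeasurableSet S → S ⊆ k ⁻¹' {i} →
      ‖(∫ ω in S, Z ω ∂P) - (P S).toReal • v i‖ ≤ h * (P S).toReal := by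
    intro S i hSm hSsub
    have hconst : IntegrableOn (fun _ : Ω => v i) S P :=
      integrableOn_const (measure_ne_top P S)
    have heq : (∫ ω in S, Z ω ∂P) - (P S).toReal • v i
        = ∫ ω in S, (Z ω - v i) ∂P := by
      rw [integral_sub hZi.integrableOn hconst, setIntegral_const, measureReal_def]
    rw [heq]
    apply norm_setIntegral_le_of_norm_le_const (measure_lt_top P S)
    intro ω hω
    exact hclose i ω (hSsub hω)
  have hD : (∫ ω in B, Z ω ∂P) - c • (∫ ω in A, Z ω ∂P)
      = ∑ i ∈ T, (((∫ ω in Bs i, Z ω ∂P) - (P (Bs i)).toReal • v i)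
        - c • ((∫ ω in As i, Z ω ∂P) - (P (As i)).toReal • v i)) := by
    rw [hIntB, hIntA, Finset.smul_sum, ← Finset.sum_sub_distrib]
    apply Finset.sum_congr rfl
    intro i _
    rw [smul_sub, hPBsR i, ← smul_smul]
    abel
  have hsumBR : ∑ i ∈ T, (P (Bs i)).toReal = εR := by
    have : (∑ i ∈ T, P (Bs i)) = ε := by
      rw [← measure_biUnion_finset hBsdisj (fun i _ => hBs2 i), ← hB, hPB]
    calc ∑ i ∈ T, (P (Bs i)).toReal = (∑ i ∈ T, P (Bs i)).toReal :=
          (ENNReal.toReal_sum (fun i _ => measure_ne_top P _)).symm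
      _ = εR := by rw [this]
  have hDnorm : ‖(∫ ω in B, Z ω ∂P) - c • (∫ ω in A, Z ω ∂P)‖ ≤ 2 * h * εR := by
    rw [hD]
    calc ‖∑ i ∈ T, (((∫ ω in Bs i, Z ω ∂P) - (P (Bs i)).toReal • v i)
          - c • ((∫ ω in As i, Z ω ∂P) - (P (As i)).toReal • v i))‖
        ≤ ∑ i ∈ T, ‖((∫ ω in Bs i, Z ω ∂P) - (P (Bs i)).toReal • v i)
          - c • ((∫ ω in As i, Z ω ∂P) - (P (As i)).toReal • v i)‖ :=
          norm_sum_le _ _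
      _ ≤ ∑ i ∈ T, 2 * h * (P (Bs i)).toReal := by
          apply Finset.sum_le_sum
          intro i _
          have e1 := hpieceerr (Bs i) i (hBs2 i)
            ((hBs1 i).trans Set.inter_subset_right)
          have e2 := hpieceerr (As i) i (hAsm i) Set.inter_subset_right
          calc ‖((∫ ω in Bs i, Z ω ∂P) - (P (Bs i)).toReal • v i)
                - c • ((∫ ω in As i, Z ω ∂P) - (P (As i)).toReal • v i)‖
              ≤ ‖(∫ ω in Bs i, Z ω ∂P) - (P (Bs i)).toReal • v i‖
                + ‖c • ((∫ ω in As i, Z ω ∂P) - (P (As i)).toReal • v i)‖ :=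
                norm_sub_le _ _
            _ ≤ h * (P (Bs i)).toReal + c * (h * (P (As i)).toReal) := by
                apply add_le_add e1
                rw [norm_smul, Real.norm_eq_abs, abs_of_pos hcpos]
                exact mul_le_mul_of_nonneg_left e2 hcpos.le
            _ = 2 * h * (P (Bs i)).toReal := by rw [hPBsR i]; ring
      _ = 2 * h * εR := by rw [← Finset.mul_sum, hsumBR]
  -- conclude
  have hgoal : (P B).toReal⁻¹ • (∫ ω in B, Z ω ∂P) - PAR⁻¹ • (∫ ω in A, Z ω ∂P)
      = εR⁻¹ • ((∫ ω in B, Z ω ∂P) - c • (∫ ω in A, Z ω ∂P)) := by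
    rw [hPB, smul_sub, smul_smul]
    congr 2
    rw [hc]
    field_simp
  rw [hgoal, norm_smul, Real.norm_eq_abs, abs_of_pos (by positivity : (0:ℝ) < εR⁻¹)]
  calc εR⁻¹ * ‖(∫ ω in B, Z ω ∂P) - c • (∫ ω in A, Z ω ∂P)‖
      ≤ εR⁻¹ * (2 * h * εR) := mul_le_mul_of_nonneg_left hDnorm (by positivity)
    _ = 2 * h := by field_simp
    _ < δ := by rw [hh]; linarith
end
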